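/- Let (X, κ) = (Y, κ) ∨ (S, κ), where Y is finite with #Y > 1, (Y, κ) is irreducible, and (S, κ) is a digital simple closed curve of at least 5 points. Then (X, κ) is irreducible. -/

import Mathlib

/-- A point of the digital ambient space `ℤ^n`. -/
abbrev ZPoint (n : ℕ) : Type := Fin n → ℤ

/-- `f : X → Y` is `(κ, lam)`-continuous: adjacent points map to equal or adjacent points. -/
def DigCont {α β : Type*} (κ : α → α → Prop) (lam : β → β → Prop)
    (X : Set α) (Y : Set β) (f : X → Y) : Prop :=
  ∀ x x' : X, κ x.1 x'.1 → f x = f x' ∨ lam (f x).1 (f x').1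

/-- A digital homotopy of length `m` from `f` to `g` (time parametrized by `0, 1, …, m`). -/
def HtpyN {α β : Type*} (κ : α → α → Prop) (lam : β → β → Prop)
    (X : Set α) (Y : Set β) (m : ℕ) (f g : X → Y) : Prop :=
  ∃ F : X → ℕ → Y,
    (∀ x, F x 0 = f x) ∧ (∀ x, F x m = g x) ∧
    (∀ x, ∀ t, t < m → (F x t = F x (t + 1) ∨ lam (F x t).1 (F x (t + 1)).1)) ∧
    (∀ t, t ≤ m → DigCont κ lam X Y (fun x => F x t))

/-- `f` and `g` are digitally homotopic. -/
def Htpy {α β : Type*} (κ : α → α → Prop) (lam : β → β → Prop)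
    (X : Set α) (Y : Set β) (f g : X → Y) : Prop :=
  ∃ m : ℕ, HtpyN κ lam X Y m f g

/-- A digital image `(X, κ)` is reducible if it is homotopy equivalent to a digital
image `(Y, lam)` with strictly fewer points. -/
def Reducible {α : Type*} (κ : α → α → Prop) (X : Set α) : Prop :=
  ∃ (k : ℕ) (Y : Set (ZPoint k)) (lam : ZPoint k → ZPoint k → Prop),
    Symmetric lam ∧ Irreflexive lam ∧
    Y.Finite ∧ Y.ncard < X.ncard ∧
    ∃ (f : X → Y) (g : Y → X),
      DigCont κ lam X Y f ∧ DigCont lam κ Y X g ∧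
      Htpy κ κ X X (g ∘ f) id ∧ Htpy lam lam Y Y (f ∘ g) id

/-- A digital image `(X, κ)` is rigid if the only continuous self-map of `X`
homotopic to the identity is the identity. -/
def Rigid {α : Type*} (κ : α → α → Prop) (X : Set α) : Prop :=
  ∀ f : X → X, DigCont κ κ X X f → Htpy κ κ X X id f → f = id

/-- A `κ`-path of length `m` in `X` from `a` to `b`. -/
def IsPathIn {α : Type*} (κ : α → α → Prop) (X : Set α) (m : ℕ) (p : ℕ → α)
    (a b : α) : Prop :=
  (∀ i ≤ m, p i ∈ X) ∧ p 0 = a ∧ p m = b ∧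
    ∀ i < m, p i = p (i + 1) ∨ κ (p i) (p (i + 1))

/-- `(X, κ)` is connected: any two points of `X` are joined by a `κ`-path in `X`. -/
def DigConnected {α : Type*} (κ : α → α → Prop) (X : Set α) : Prop :=
  ∀ a ∈ X, ∀ b ∈ X, ∃ (m : ℕ) (p : ℕ → α), IsPathIn κ X m p a b

/-- `A` is a freezing set for `(X, κ)`. -/
def FreezingSet {α : Type*} (κ : α → α → Prop) (X A : Set α) : Prop :=
  ∀ f : X → X, DigCont κ κ X X f → (∀ x : X, x.1 ∈ A → f x = x) → f = id

/-- `A` is a cold set for `(X, κ)`. -/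
def ColdSet {α : Type*} (κ : α → α → Prop) (X A : Set α) : Prop :=
  ∀ f : X → X, DigCont κ κ X X f → (∀ x : X, x.1 ∈ A → f x = x) →
    ∀ x : X, f x = x ∨ κ (f x).1 x.1

/-- The generalized normal product adjacency `NP_v(κ_1, …, κ_v)`:
distinct points are adjacent iff each coordinate pair is equal or adjacent. -/
def NPadj {v : ℕ} {α : Fin v → Type*} (κ : ∀ i, α i → α i → Prop)
    (x x' : ∀ i, α i) : Prop :=
  x ≠ x' ∧ ∀ i, x i = x' i ∨ κ i (x i) (x' i)

/-- `S` is a digital `κ`-simple closed curve of `m` distinct points. -/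
def IsSimpleClosedCurve {α : Type*} (κ : α → α → Prop) (S : Set α) (m : ℕ) : Prop :=
  ∃ s : ZMod m → α, Function.Injective s ∧ S = Set.range s ∧
    ∀ i j : ZMod m, (κ (s i) (s j) ↔ (j = i + 1 ∨ j = i - 1))

/-- `f` is a 1-map in `C(X, κ)`: a continuous self-map moving each point by at most one step. -/
def OneMap {α : Type*} (κ : α → α → Prop) (X : Set α) (f : X → X) : Prop :=
  DigCont κ κ X X f ∧ ∀ x : X, f x = x ∨ κ (f x).1 x.1

section Helpers

variable {α β γ : Type*} {κ : α → α → Prop} {lam : β → β → Prop} {mu : γ → γ → Prop}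
variable {X : Set α} {Y : Set β} {Z : Set γ}

theorem DigCont.comp {f : X → Y} {g : Y → Z} (hf : DigCont κ lam X Y f)
    (hg : DigCont lam mu Y Z g) : DigCont κ mu X Z (g ∘ f) := by
  intro x x' hx
  rcases hf x x' hx with h | h
  · exact Or.inl (by simp [Function.comp, h])
  · exact hg (f x) (f x') h

theorem Htpy_of_eq {f g : X → Y} (hf : DigCont κ lam X Y f) (h : f = g) :
    Htpy κ lam X Y f g := by
  subst h
  refine ⟨0, fun x _ => f x, fun x => rfl, fun x => rfl, ?_, ?_⟩
  · intro x t ht; omega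
  · intro t ht; exact hf

theorem Htpy.symm (hlam : Symmetric lam) {f g : X → Y} (h : Htpy κ lam X Y f g) :
    Htpy κ lam X Y g f := by
  obtain ⟨m, F, h0, hm, hstep, hcont⟩ := h
  refine ⟨m, fun x t => F x (m - t), by simp [hm], by simp [h0], ?_, ?_⟩
  · intro x t ht
    dsimp only
    have h1 : m - t = (m - (t+1)) + 1 := by omega
    rcases hstep x (m - (t+1)) (by omega) with h | h
    · left; rw [h1, h]
    · right; rw [h1]; exact hlam h
  · intro t ht; exact hcont (m - t) (by omega)

theorem Htpy.trans {f g h : X → Y} (h1 : Htpy κ lam X Y f g) (h2 : Htpy κ lam X Y g h) :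
    Htpy κ lam X Y f h := by
  obtain ⟨m1, F1, F10, F1m, F1s, F1c⟩ := h1
  obtain ⟨m2, F2, F20, F2m, F2s, F2c⟩ := h2
  refine ⟨m1 + m2, fun x t => if t ≤ m1 then F1 x t else F2 x (t - m1), ?_, ?_, ?_, ?_⟩
  · intro x; simp [F10]
  · intro x
    by_cases hm : m2 = 0
    · simp only [hm, Nat.add_zero, le_refl, if_pos, F1m]
      rw [← F2m x, hm, ← F20 x]
    · simp [show ¬ (m1 + m2 ≤ m1) by omega, F2m]
  · intro x t ht
    dsimp only
    by_cases hle : t + 1 ≤ m1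
    · simpa [show t ≤ m1 by omega, hle] using F1s x t (by omega)
    by_cases h0 : t ≤ m1
    · have : t = m1 := by omega
      subst this
      simpa [h0, hle, F1m, ← F20] using F2s x 0 (by omega)
    · simpa [h0, hle, show t - m1 + 1 = t + 1 - m1 by omega] using F2s x (t - m1) (by omega)
  · intro t ht
    by_cases h0 : t ≤ m1
    · simpa [h0] using F1c t h0
    · simpa [h0] using F2c (t - m1) (by omega)

theorem Htpy.comp_left {f g : X → Y} {phi : Y → Z} (hphi : DigCont lam mu Y Z phi)
    (h : Htpy κ lam X Y f g) : Htpy κ mu X Z (phi ∘ f) (phi ∘ g) := by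
  obtain ⟨m, F, h0, hm, hstep, hcont⟩ := h
  refine ⟨m, fun x t => phi (F x t), by simp [Function.comp, h0], by simp [Function.comp, hm], ?_, ?_⟩
  · intro x t ht
    dsimp only
    rcases hstep x t ht with h | h
    · left; rw [h]
    · rcases hphi _ _ h with h' | h'
      · left; exact h'
      · right; exact h'
  · intro t ht; exact (hcont t ht).comp hphi

theorem Htpy.comp_right {f g : Y → Z} {psi : X → Y} (hpsi : DigCont κ lam X Y psi)
    (h : Htpy lam mu Y Z f g) : Htpy κ mu X Z (f ∘ psi) (g ∘ psi) := by
  obtain ⟨m, F, h0, hm, hstep, hcont⟩ := h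
  refine ⟨m, fun x t => F (psi x) t, by simp [Function.comp, h0], by simp [Function.comp, hm], ?_, ?_⟩
  · intro x t ht; exact hstep (psi x) t ht
  · intro t ht; exact hpsi.comp (hcont t ht)

end Helpers
section Cycle

variable {α : Type*}

/-- `f` is a rotation of the simple closed curve parametrized by `s`. -/
def IsRotMap {m : ℕ} (s : ZMod m → α) (f : ↥(Set.range s) → ↥(Set.range s)) : Prop :=
  ∃ a : ZMod m, ∀ i : ZMod m, (f ⟨s i, Set.mem_range_self i⟩).1 = s (i + a)

theorem int_small_zero {m : ℕ} (hm : 5 ≤ m) {z : ℤ} (hz : |z| ≤ 4)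
    (h : (z : ZMod m) = 0) : z = 0 := by
  obtain ⟨k, hk⟩ := (ZMod.intCast_zmod_eq_zero_iff_dvd z m).mp h
  have hm' : (5 : ℤ) ≤ m := by exact_mod_cast hm
  have h1 : -4 ≤ z := by rw [abs_le] at hz; exact hz.1
  have h2 : z ≤ 4 := by rw [abs_le] at hz; exact hz.2
  rcases lt_trichotomy k 0 with h | h | h
  · nlinarith
  · simp [hk, h]
  · nlinarith

theorem rot_step {m : ℕ} (hm : 5 ≤ m) {κ : α → α → Prop} {s : ZMod m → α}
    (hinj : Function.Injective s)
    (hadj : ∀ i j : ZMod m, κ (s i) (s j) ↔ (j = i + 1 ∨ j = i - 1))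
    {f f' : ↥(Set.range s) → ↥(Set.range s)}
    (hf : IsRotMap s f)
    (hcont : DigCont κ κ (Set.range s) (Set.range s) f')
    (hstep : ∀ x, f' x = f x ∨ κ (f' x).1 (f x).1) :
    IsRotMap s f' := by
  haveI : NeZero m := ⟨by omega⟩
  obtain ⟨a, ha⟩ := hf
  -- for each i get an integer displacement E i ∈ [-1, 1]
  have hE : ∀ i : ZMod m, ∃ E : ℤ, |E| ≤ 1 ∧
      (f' ⟨s i, Set.mem_range_self i⟩).1 = s (i + a + (E : ZMod m)) := by
    intro i
    obtain ⟨j, hj⟩ := (f' ⟨s i, Set.mem_range_self i⟩).2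
    rcases hstep ⟨s i, Set.mem_range_self i⟩ with h | h
    · refine ⟨0, by simp, ?_⟩
      rw [h, ha i]; simp
    · rw [← hj, ha i] at h
      rcases (hadj j (i + a)).mp h with h' | h'
      · refine ⟨-1, by simp, ?_⟩
        rw [← hj]
        congr 1
        push_cast
        linear_combination -h'
      · refine ⟨1, by simp, ?_⟩
        rw [← hj]
        congr 1
        push_cast
        linear_combination -h'
  choose E hE1 hE2 using hE
  -- consecutive displacements differ by an element of {-2, -1, 0}
  have hD : ∀ i : ZMod m, E (i + 1) - E i ≤ 0 ∧ -2 ≤ E (i + 1) - E i := by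
    intro i
    have hadj1 : κ (s i) (s (i + 1)) := (hadj i (i + 1)).mpr (Or.inl rfl)
    have h := hcont ⟨s i, Set.mem_range_self i⟩ ⟨s (i + 1), Set.mem_range_self _⟩ hadj1
    have hb1 := abs_le.mp (hE1 i)
    have hb2 := abs_le.mp (hE1 (i + 1))
    rcases h with h | h
    · -- equal: indices equal in ZMod m
      have : s (i + a + (E i : ZMod m)) = s (i + 1 + a + (E (i+1) : ZMod m)) := by
        rw [← hE2 i, ← hE2 (i+1), h]
      have h0 : ((E (i+1) - E i + 1 : ℤ) : ZMod m) = 0 := by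
        have := hinj this
        push_cast
        linear_combination -this
      have := int_small_zero hm (by rw [abs_le]; omega) h0
      omega
    · rw [hE2 i, hE2 (i+1)] at h
      rcases (hadj _ _).mp h with h' | h'
      · -- i+1+a+E(i+1) = i+a+E i + 1
        have h0 : ((E (i+1) - E i : ℤ) : ZMod m) = 0 := by
          push_cast
          linear_combination h'
        have := int_small_zero hm (by rw [abs_le]; omega) h0
        omega
      · -- i+1+a+E(i+1) = i+a+E i - 1
        have h0 : ((E (i+1) - E i + 2 : ℤ) : ZMod m) = 0 := by
          push_cast
          linear_combination h'
        have := int_small_zero hm (by rw [abs_le]; omega) h0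
        omega
  -- the displacements sum to zero around the cycle, so they are all equal
  have hsum : ∑ i : ZMod m, (E (i + 1) - E i) = 0 := by
    rw [Finset.sum_sub_distrib]
    have : ∑ i : ZMod m, E (i + 1) = ∑ i : ZMod m, E i :=
      Fintype.sum_equiv (Equiv.addRight (1 : ZMod m)) _ _ (fun i => rfl)
    rw [this, sub_self]
  have hzero : ∀ i : ZMod m, E (i + 1) - E i = 0 := by
    have := (Finset.sum_eq_zero_iff_of_nonpos
      (fun i _ => (hD i).1)).mp hsum
    intro i; exact this i (Finset.mem_univ i)
  have hstepE : ∀ i : ZMod m, E (i + 1) = E i := fun i => by have := hzero i; omega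
  have hconstN : ∀ k : ℕ, E ((k : ℕ) : ZMod m) = E 0 := by
    intro k
    induction k with
    | zero => simp
    | succ k ih => rw [Nat.cast_succ, hstepE ((k : ℕ) : ZMod m)]; exact ih
  have hconst : ∀ i : ZMod m, E i = E 0 := by
    intro i
    have := hconstN i.val
    rwa [ZMod.natCast_rightInverse i] at this
  refine ⟨a + ((E 0 : ℤ) : ZMod m), fun i => ?_⟩
  rw [hE2 i, hconst i]
  ring_nf

theorem rot_bijective {m : ℕ} (hm : 5 ≤ m) {s : ZMod m → α}
    (hinj : Function.Injective s)
    {f : ↥(Set.range s) → ↥(Set.range s)} (hf : IsRotMap s f) :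
    Function.Bijective f := by
  haveI : NeZero m := ⟨by omega⟩
  obtain ⟨a, ha⟩ := hf
  constructor
  · intro x x' hxx
    obtain ⟨i, hi⟩ := x.2
    obtain ⟨i', hi'⟩ := x'.2
    have hx : x = ⟨s i, Set.mem_range_self i⟩ := Subtype.ext hi.symm
    have hx' : x' = ⟨s i', Set.mem_range_self i'⟩ := Subtype.ext hi'.symm
    rw [hx, hx'] at hxx
    have : s (i + a) = s (i' + a) := by rw [← ha i, ← ha i', hxx]
    have : i = i' := by have := hinj this; exact add_right_cancel this
    rw [hx, hx', this]
  · intro y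
    obtain ⟨j, hj⟩ := y.2
    refine ⟨⟨s (j - a), Set.mem_range_self _⟩, ?_⟩
    apply Subtype.ext
    rw [ha (j - a)]
    rw [← hj]
    congr 1
    ring

theorem chain_rot {m : ℕ} (hm : 5 ≤ m) {κ : α → α → Prop} {s : ZMod m → α}
    (hinj : Function.Injective s)
    (hadj : ∀ i j : ZMod m, κ (s i) (s j) ↔ (j = i + 1 ∨ j = i - 1))
    {f : ↥(Set.range s) → ↥(Set.range s)} {M : ℕ}
    (hH : HtpyN κ κ (Set.range s) (Set.range s) M f id) :
    IsRotMap s f := by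
  obtain ⟨F, h0, hM, hstep, hcont⟩ := hH
  have key : ∀ k ≤ M, IsRotMap s (fun x => F x (M - k)) := by
    intro k
    induction k with
    | zero =>
      intro _
      refine ⟨0, fun i => ?_⟩
      simp only [Nat.sub_zero, hM]
      simp
    | succ k ih =>
      intro hk
      have hrec := ih (by omega)
      have ht : M - k = (M - (k + 1)) + 1 := by omega
      refine rot_step hm hinj hadj hrec (hcont (M - (k+1)) (by omega)) ?_
      intro x
      have := hstep x (M - (k+1)) (by omega)
      rw [← ht] at this
      exact this
  have := key M (le_refl M)
  simp only [Nat.sub_self] at this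
  obtain ⟨a, ha⟩ := this
  exact ⟨a, fun i => by rw [← h0]; exact ha i⟩

end Cycle
section Haarmann

variable {α : Type*} {κ : α → α → Prop} {X : Set α}

theorem DigCont_id : DigCont κ κ X X id := fun _ _ hx => Or.inr hx

theorem DigCont.iterate {G : X → X} (hG : DigCont κ κ X X G) (k : ℕ) :
    DigCont κ κ X X (G^[k]) := by
  induction k with
  | zero => simpa using DigCont_id
  | succ k ih => rw [Function.iterate_succ]; exact hG.comp ih

theorem htpy_id_iterate {G : X → X} (hG : DigCont κ κ X X G)
    (hH : Htpy κ κ X X id G) (k : ℕ) : Htpy κ κ X X id (G^[k]) := by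
  induction k with
  | zero => exact Htpy_of_eq DigCont_id (by simp)
  | succ k ih =>
    refine ih.trans ?_
    have := hH.comp_left (hG.iterate k)
    rw [Function.comp_id] at this
    rw [Function.iterate_succ]
    exact this

theorem exists_idem_iter {β : Type*} [Finite β] (G : β → β) :
    ∃ N, 1 ≤ N ∧ G^[N] ∘ G^[N] = G^[N] := by
  obtain ⟨i, j, hne, heq⟩ := Finite.exists_ne_map_eq_of_infinite (fun k : ℕ => G^[k])
  wlog hij : i < j generalizing i j
  · exact this j i hne.symm heq.symm (by omega)
  set d := j - i with hd
  have hd1 : 1 ≤ d := by omega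
  have key : ∀ l, G^[l + j] = G^[l + i] := by
    intro l
    rw [Function.iterate_add, Function.iterate_add, heq]
  have step : ∀ k, i ≤ k → G^[k + d] = G^[k] := by
    intro k hk
    have h1 : k + d = (k - i) + j := by omega
    have h2 : (k - i) + i = k := by omega
    rw [h1, key, h2]
  have down : ∀ t k, i ≤ k → G^[k + t * d] = G^[k] := by
    intro t
    induction t with
    | zero => intro k _; simp
    | succ t ih =>
      intro k hk
      have h1 : k + (t + 1) * d = (k + t * d) + d := by ring
      rw [h1, step (k + t * d) (by omega), ih k hk]
  refine ⟨(i + 1) * d, by nlinarith, ?_⟩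
  rw [← Function.iterate_add]
  have h2 : (i + 1) * d + (i + 1) * d = (i + 1) * d + (i + 1) * d := rfl
  have hNi : i ≤ (i + 1) * d := by nlinarith
  exact down (i + 1) ((i + 1) * d) hNi

theorem reducible_of_nonsurj {n : ℕ} {κ : ZPoint n → ZPoint n → Prop}
    (hsym : Symmetric κ) (hirr : Irreflexive κ) {Y : Set (ZPoint n)} (hfin : Y.Finite)
    {G : Y → Y} (hG : DigCont κ κ Y Y G) (hH : Htpy κ κ Y Y id G)
    (hns : ¬ Function.Surjective G) : Reducible κ Y := by
  haveI := hfin.to_subtype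
  obtain ⟨N, hN1, hNidem⟩ := exists_idem_iter G
  set e := G^[N] with he_def
  have he : DigCont κ κ Y Y e := hG.iterate N
  have hee : ∀ x, e (e x) = e x := fun x => congrFun hNidem x
  have heH : Htpy κ κ Y Y id e := htpy_id_iterate hG hH N
  have hens : ¬ Function.Surjective e := by
    intro hsurj
    apply hns
    have hne : e = G ∘ G^[N - 1] := by
      conv_lhs => rw [he_def, show N = (N - 1) + 1 by omega]
      rw [Function.iterate_succ']
    rw [hne] at hsurj
    exact Function.Surjective.of_comp hsurj
  simp only [Function.Surjective, not_forall] at hens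
  obtain ⟨p, hp'⟩ := hens
  have hp : ∀ q, e q ≠ p := by push_neg at hp'; exact hp'
  set A : Set (ZPoint n) := Subtype.val '' Set.range e with hA_def
  have hAY : A ⊆ Y := by
    rintro _ ⟨q, -, rfl⟩
    exact q.2
  have hpA : p.1 ∉ A := by
    rintro ⟨q, ⟨y, rfl⟩, hval⟩
    exact hp y (Subtype.ext hval)
  have hfinA : A.Finite := hfin.subset hAY
  have hcard : A.ncard < Y.ncard :=
    Set.ncard_lt_ncard ⟨hAY, fun hYA => hpA (hYA p.2)⟩ hfin
  refine ⟨n, A, κ, hsym, hirr, hfinA, hcard, ?_⟩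
  refine ⟨fun y => ⟨(e y).1, ⟨e y, ⟨y, rfl⟩, rfl⟩⟩, fun a => ⟨a.1, hAY a.2⟩, ?_, ?_, ?_, ?_⟩
  · intro x x' hx
    rcases he x x' hx with h | h
    · exact Or.inl (Subtype.ext (show (e x).1 = (e x').1 from congrArg Subtype.val h))
    · exact Or.inr h
  · intro a a' h
    exact Or.inr h
  · have hgf : (fun a : ↥A => (⟨a.1, hAY a.2⟩ : ↥Y)) ∘
        (fun y => (⟨(e y).1, ⟨e y, ⟨y, rfl⟩, rfl⟩⟩ : ↥A)) = e := by
      funext y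
      exact Subtype.ext rfl
    rw [hgf]
    exact heH.symm hsym
  · have hfg : (fun y => (⟨(e y).1, ⟨e y, ⟨y, rfl⟩, rfl⟩⟩ : ↥A)) ∘
        (fun a : ↥A => (⟨a.1, hAY a.2⟩ : ↥Y)) = id := by
      funext a
      obtain ⟨-, ⟨q, rfl⟩, hval⟩ := a.2
      apply Subtype.ext
      show (e ⟨a.1, hAY a.2⟩).1 = a.1
      have : (⟨a.1, hAY a.2⟩ : ↥Y) = e q := Subtype.ext hval.symm
      rw [this, hee q, hval]
    rw [hfg]
    exact Htpy_of_eq DigCont_id rfl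

end Haarmann
/-- A wedge of a finite irreducible digital image with more than one
point and a digital simple closed curve of at least 5 points is irreducible. -/
theorem wedge_with_scc_irreducible
    {n : ℕ} (κ : ZPoint n → ZPoint n → Prop)
    (hsym : Symmetric κ) (hirr : Irreflexive κ)
    (Y S : Set (ZPoint n)) (x₀ : ZPoint n)
    (hYfin : Y.Finite) (hYcard : 1 < Y.ncard)
    (m : ℕ) (hm : 5 ≤ m) (hS : IsSimpleClosedCurve κ S m)
    (hint : Y ∩ S = {x₀})
    (hwedge : ∀ x ∈ Y, ∀ y ∈ S, κ x y → x = x₀ ∨ y = x₀)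
    (hY : ¬ Reducible κ Y) :
    ¬ Reducible κ (Y ∪ S) := by
  classical
  obtain ⟨s, hsinj, hSrange, hadj⟩ := hS
  subst hSrange
  intro hred
  obtain ⟨k, Z, lam, hlsym, hlirr, hZfin, hZcard, f, g, hf, hg, Hgf, Hfg⟩ := hred
  haveI : NeZero m := ⟨by omega⟩
  haveI : Fact (1 < m) := ⟨by omega⟩
  have hx₀YS : x₀ ∈ Y ∩ Set.range s := by rw [hint]; rfl
  have hx₀Y : x₀ ∈ Y := hx₀YS.1
  have hx₀S : x₀ ∈ Set.range s := hx₀YS.2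
  have hYX : Y ⊆ Y ∪ Set.range s := Set.subset_union_left
  have hSX : Set.range s ⊆ Y ∪ Set.range s := Set.subset_union_right
  have hSfin : (Set.range s).Finite := Set.finite_range s
  have hXfin : (Y ∪ Set.range s).Finite := hYfin.union hSfin
  have hh : DigCont κ κ (Y ∪ Set.range s) (Y ∪ Set.range s) (g ∘ f) := hf.comp hg
  -- the composite misses a point
  have hmiss : ∃ p : ↥(Y ∪ Set.range s), ∀ q, (g ∘ f) q ≠ p := by
    by_contra hc
    push_neg at hc
    have hsurj : Function.Surjective (g ∘ f) := fun p => hc p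
    have hgsurj : Function.Surjective g := Function.Surjective.of_comp hsurj
    haveI := hZfin.to_subtype
    have hle : Nat.card ↥(Y ∪ Set.range s) ≤ Nat.card ↥Z :=
      Nat.card_le_card_of_surjective g hgsurj
    rw [Nat.card_coe_set_eq, Nat.card_coe_set_eq] at hle
    omega
  obtain ⟨p, hp⟩ := hmiss
  -- retractions onto the pieces
  set rY : ↥(Y ∪ Set.range s) → ↥Y :=
    fun x => if hx : x.1 ∈ Y then ⟨x.1, hx⟩ else ⟨x₀, hx₀Y⟩ with hrY_def
  set rS : ↥(Y ∪ Set.range s) → ↥(Set.range s) :=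
    fun x => if hx : x.1 ∈ Set.range s then ⟨x.1, hx⟩ else ⟨x₀, hx₀S⟩ with hrS_def
  set iY : ↥Y → ↥(Y ∪ Set.range s) := fun y => ⟨y.1, hYX y.2⟩ with hiY_def
  set iS : ↥(Set.range s) → ↥(Y ∪ Set.range s) := fun y => ⟨y.1, hSX y.2⟩ with hiS_def
  have hiYc : DigCont κ κ Y (Y ∪ Set.range s) iY := fun y y' hy => Or.inr hy
  have hiSc : DigCont κ κ (Set.range s) (Y ∪ Set.range s) iS := fun y y' hy => Or.inr hy
  have hrYc : DigCont κ κ (Y ∪ Set.range s) Y rY := by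
    intro x x' hxx
    by_cases hx : x.1 ∈ Y <;> by_cases hx' : x'.1 ∈ Y
    · right
      simp only [hrY_def, dif_pos hx, dif_pos hx']
      exact hxx
    · have hx'S : x'.1 ∈ Set.range s := x'.2.resolve_left hx'
      have hx'0 : x'.1 ≠ x₀ := fun hc => hx' (hc ▸ hx₀Y)
      have := (hwedge x.1 hx x'.1 hx'S hxx).resolve_right hx'0
      left
      simp only [hrY_def, dif_pos hx, dif_neg hx']
      exact Subtype.ext this
    · have hxS : x.1 ∈ Set.range s := x.2.resolve_left hx
      have hx0 : x.1 ≠ x₀ := fun hc => hx (hc ▸ hx₀Y)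
      have := (hwedge x'.1 hx' x.1 hxS (hsym hxx)).resolve_right hx0
      left
      simp only [hrY_def, dif_neg hx, dif_pos hx']
      exact Subtype.ext this.symm
    · left
      simp only [hrY_def, dif_neg hx, dif_neg hx']
  have hrSc : DigCont κ κ (Y ∪ Set.range s) (Set.range s) rS := by
    intro x x' hxx
    by_cases hx : x.1 ∈ Set.range s <;> by_cases hx' : x'.1 ∈ Set.range s
    · right
      simp only [hrS_def, dif_pos hx, dif_pos hx']
      exact hxx
    · have hx'Y : x'.1 ∈ Y := x'.2.resolve_right hx'
      have hx'0 : x'.1 ≠ x₀ := fun hc => hx' (hc ▸ hx₀S)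
      have := (hwedge x'.1 hx'Y x.1 hx (hsym hxx)).resolve_left hx'0
      left
      simp only [hrS_def, dif_pos hx, dif_neg hx']
      exact Subtype.ext this
    · have hxY : x.1 ∈ Y := x.2.resolve_right hx
      have hx0 : x.1 ≠ x₀ := fun hc => hx (hc ▸ hx₀S)
      have := (hwedge x.1 hxY x'.1 hx' hxx).resolve_left hx0
      left
      simp only [hrS_def, dif_neg hx, dif_pos hx']
      exact Subtype.ext this.symm
    · left
      simp only [hrS_def, dif_neg hx, dif_neg hx']
  -- transported homotopies
  have hYid : (rY ∘ id) ∘ iY = (id : ↥Y → ↥Y) := by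
    funext y
    show rY (iY y) = y
    rw [hrY_def, hiY_def]
    exact dif_pos y.2
  have hSid : (rS ∘ id) ∘ iS = (id : ↥(Set.range s) → ↥(Set.range s)) := by
    funext y
    show rS (iS y) = y
    rw [hrS_def, hiS_def]
    exact dif_pos y.2
  have HYhtpy : Htpy κ κ Y Y ((rY ∘ (g ∘ f)) ∘ iY) id := by
    have := (Hgf.comp_left hrYc).comp_right hiYc
    rwa [hYid] at this
  have HShtpy : Htpy κ κ (Set.range s) (Set.range s) ((rS ∘ (g ∘ f)) ∘ iS) id := by
    have := (Hgf.comp_left hrSc).comp_right hiSc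
    rwa [hSid] at this
  have hGSrot : IsRotMap s ((rS ∘ (g ∘ f)) ∘ iS) := by
    obtain ⟨M, hH⟩ := HShtpy
    exact chain_rot hm hsinj hadj hH
  have hGSbij := rot_bijective hm hsinj hGSrot
  -- case analysis on the missed point
  by_cases hpY : p.1 ∈ Y ∧ p.1 ≠ x₀
  · -- the missed point is in Y \ {x₀} : contradict irreducibility of Y
    have hGYc : DigCont κ κ Y Y ((rY ∘ (g ∘ f)) ∘ iY) := (hiYc.comp hh).comp hrYc
    have hGYns : ¬ Function.Surjective ((rY ∘ (g ∘ f)) ∘ iY) := by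
      intro hs
      obtain ⟨y, hy⟩ := hs ⟨p.1, hpY.1⟩
      have hy' : rY ((g ∘ f) (iY y)) = ⟨p.1, hpY.1⟩ := hy
      rw [hrY_def] at hy'
      by_cases hmem : ((g ∘ f) (iY y)).1 ∈ Y
      · simp only [dif_pos hmem] at hy'
        have hval := congrArg Subtype.val hy'
        exact hp (iY y) (Subtype.ext hval)
      · simp only [dif_neg hmem] at hy'
        have hval := congrArg Subtype.val hy'
        exact hpY.2 hval.symm
    exact hY (reducible_of_nonsurj hsym hirr hYfin hGYc (HYhtpy.symm hsym) hGYns)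
  · -- the missed point is in S
    have hpS : p.1 ∈ Set.range s := by
      rcases p.2 with hYp | hSp
      · rcases Classical.em (p.1 = x₀) with h0 | h0
        · exact h0 ▸ hx₀S
        · exact absurd ⟨hYp, h0⟩ hpY
      · exact hSp
    by_cases hp0 : p.1 = x₀
    · -- p = x₀
      obtain ⟨σ1, hσ1⟩ := hGSbij.2 ⟨x₀, hx₀S⟩
      have hσ1' : rS ((g ∘ f) (iS σ1)) = ⟨x₀, hx₀S⟩ := hσ1
      have h1 : ((g ∘ f) (iS σ1)).1 ∉ Set.range s := by
        intro hmem
        apply hp (iS σ1)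
        rw [hrS_def] at hσ1'
        simp only [dif_pos hmem] at hσ1'
        have hval := congrArg Subtype.val hσ1'
        exact Subtype.ext (by rw [show ((g ∘ f) (iS σ1)).1 = x₀ from hval, hp0])
      have h1Y : ((g ∘ f) (iS σ1)).1 ∈ Y := ((g ∘ f) (iS σ1)).2.resolve_right h1
      obtain ⟨i, hi⟩ := σ1.2
      have hne : (⟨s (i + 1), Set.mem_range_self _⟩ : ↥(Set.range s)) ≠ σ1 := by
        intro hc
        have hval : s (i + 1) = σ1.1 := congrArg Subtype.val hc
        have : s (i + 1) = s i := by rw [hi]; exact hval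
        have := hsinj this
        have h10 : (1 : ZMod m) = 0 := by linear_combination this
        exact one_ne_zero h10
      have hGσ2 : ((rS ∘ (g ∘ f)) ∘ iS) ⟨s (i + 1), Set.mem_range_self _⟩ ≠ ⟨x₀, hx₀S⟩ := by
        intro hc
        exact hne (hGSbij.1 (hc.trans hσ1.symm))
      have h2 : ((g ∘ f) (iS ⟨s (i + 1), Set.mem_range_self _⟩)).1 ∈ Set.range s ∧
          ((g ∘ f) (iS ⟨s (i + 1), Set.mem_range_self _⟩)).1 ≠ x₀ := by
        by_cases hmem : ((g ∘ f) (iS ⟨s (i + 1), Set.mem_range_self _⟩)).1 ∈ Set.range s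
        · refine ⟨hmem, fun hc => ?_⟩
          exact hp (iS ⟨s (i + 1), Set.mem_range_self _⟩) (Subtype.ext (by rw [hc, hp0]))
        · exfalso
          apply hGσ2
          show rS ((g ∘ f) (iS ⟨s (i + 1), Set.mem_range_self _⟩)) = ⟨x₀, hx₀S⟩
          rw [hrS_def]
          simp only [dif_neg hmem]
      have hadj12 : κ (iS σ1).1 (iS ⟨s (i + 1), Set.mem_range_self _⟩).1 := by
        have hκ : κ (s i) (s (i + 1)) := (hadj i (i + 1)).mpr (Or.inl rfl)
        show κ σ1.1 (s (i + 1))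
        rw [← hi]
        exact hκ
      rcases hh (iS σ1) (iS ⟨s (i + 1), Set.mem_range_self _⟩) hadj12 with heq | hκ
      · apply h1
        rw [congrArg Subtype.val heq]
        exact h2.1
      · rcases hwedge _ h1Y _ h2.1 hκ with hc | hc
        · exact h1 (hc ▸ hx₀S)
        · exact h2.2 hc
    · -- p ∈ S \ {x₀} : contradict surjectivity of the rotation GS
      obtain ⟨σ, hσ⟩ := hGSbij.2 ⟨p.1, hpS⟩
      have hσ' : rS ((g ∘ f) (iS σ)) = ⟨p.1, hpS⟩ := hσ
      rw [hrS_def] at hσ'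
      by_cases hmem : ((g ∘ f) (iS σ)).1 ∈ Set.range s
      · simp only [dif_pos hmem] at hσ'
        have hval := congrArg Subtype.val hσ'
        exact hp (iS σ) (Subtype.ext hval)
      · simp only [dif_neg hmem] at hσ'
        have hval := congrArg Subtype.val hσ'
        exact hp0 hval.symm
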